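/- The reduction homomorphism GL(n, ℤ) → GL(n, ℤ/3ℤ) is injective on every finite subgroup; that is, if A ∈ GL(n, ℤ) has finite order and A ≡ I (mod 3), then A = I. -/

import Mathlib

open Finset
lemma dvd_mul_entries {n : ℕ} (d e : ℤ) (M N : Matrix (Fin n) (Fin n) ℤ)
    (hM : ∀ i j, d ∣ M i j) (hN : ∀ i j, e ∣ N i j) : ∀ i j, d * e ∣ (M * N) i j := by
  intro i j
  rw [Matrix.mul_apply]
  exact Finset.dvd_sum fun k _ => mul_dvd_mul (hM i k) (hN k j)

lemma dvd_pow_entries {n : ℕ} (d : ℤ) (M : Matrix (Fin n) (Fin n) ℤ)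
    (hM : ∀ i j, d ∣ M i j) : ∀ m, ∀ i j, d ^ (m+1) ∣ (M ^ (m+1)) i j := by
  intro m
  induction m with
  | zero => intro i j; simpa using hM i j
  | succ m ih =>
      intro i j
      have := dvd_mul_entries (d^(m+1)) d (M^(m+1)) M ih hM i j
      rw [← pow_succ, ← pow_succ] at this
      exact this

lemma prime_case {n : ℕ} (p : ℕ) (hp : p.Prime) (B : Matrix (Fin n) (Fin n) ℤ)
    (h3 : ∀ i j, (3:ℤ) ∣ B i j) (hB : (1 + B) ^ p = 1) : B = 0 := by
  by_contra hB0
  classical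
  -- existence of e with not all entries divisible by 3^e
  have hex : ∃ e, ¬ ∀ i j, (3:ℤ)^e ∣ B i j := by
    obtain ⟨i, j, hij⟩ : ∃ i j, B i j ≠ 0 := by
      by_contra h
      push_neg at h
      exact hB0 (Matrix.ext h)
    refine ⟨(B i j).natAbs, fun h => ?_⟩
    have h1 : (3:ℤ)^((B i j).natAbs) ≤ |B i j| :=
      Int.le_of_dvd (abs_pos.mpr hij) ((dvd_abs _ _).mpr (h i j))
    have h2 : ((B i j).natAbs : ℤ) < (3:ℤ)^((B i j).natAbs) := by
      exact_mod_cast Nat.lt_pow_self (n := (B i j).natAbs) (by norm_num)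
    rw [Int.abs_eq_natAbs] at h1
    omega
  set e₀ := Nat.find hex with he₀
  have he₀2 : 2 ≤ e₀ := by
    by_contra h
    push_neg at h
    exact Nat.find_spec hex fun i j =>
      dvd_trans (pow_dvd_pow (3:ℤ) (show e₀ ≤ 1 by omega)) (by simpa using h3 i j)
  set a := e₀ - 1 with ha
  have ha1 : 1 ≤ a := by omega
  have hdvd : ∀ i j, (3:ℤ)^a ∣ B i j := by
    by_contra h
    exact absurd (Nat.find_min hex (show a < e₀ by omega)) (by simpa using h)
  have hnd : ¬ ∀ i j, (3:ℤ)^(a+1) ∣ B i j := by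
    have : a + 1 = e₀ := by omega
    rw [this]
    exact Nat.find_spec hex
  -- binomial expansion
  obtain ⟨q, rfl⟩ : ∃ q, p = q + 2 := ⟨p - 2, by have := hp.two_le; omega⟩
  rw [add_comm 1 B] at hB
  have expand := (Commute.one_right B).add_pow (q+2)
  have hsum : ∑ m ∈ range (q+2+1), B ^ m * (((q+2).choose m : ℕ) : Matrix (Fin n) (Fin n) ℤ) = 1 := by
    rw [← hB, expand]
    exact Finset.sum_congr rfl fun m _ => by rw [one_pow, mul_one]
  rw [Finset.sum_range_succ'] at hsum
  simp only [pow_zero, Nat.choose_zero_right, Nat.cast_one, mul_one, one_mul] at hsum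
  have hS : ∑ m ∈ range (q+2), B ^ (m+1) * (((q+2).choose (m+1) : ℕ) : Matrix (Fin n) (Fin n) ℤ) = 0 := by
    have := hsum
    rwa [add_eq_right] at this
  rw [Finset.sum_range_succ'] at hS
  have hentry : ∀ i j, (∑ m ∈ range (q+1), (B^(m+2)) i j * (((q+2).choose (m+2) : ℕ) : ℤ))
      + B i j * (((q+2).choose 1 : ℕ) : ℤ) = 0 := by
    intro i j
    have h := congrFun (congrFun hS i) j
    simp only [Matrix.add_apply, Matrix.sum_apply, Matrix.zero_apply,
      ← Matrix.diagonal_natCast, Matrix.mul_diagonal, zero_add, pow_one] at h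
    exact h
  have hpowdvd : ∀ m : ℕ, ∀ i j, (3:ℤ)^(a*(m+2)) ∣ (B^(m+2)) i j := by
    intro m i j
    have := dvd_pow_entries ((3:ℤ)^a) B hdvd (m+1) i j
    rwa [← pow_mul] at this
  by_cases h3p : q + 2 = 3
  · -- p = 3
    have hq : q = 1 := by omega
    subst hq
    apply hnd
    intro i j
    have he := hentry i j
    rw [Finset.sum_range_succ, Finset.sum_range_one] at he
    norm_num at he
    -- he : (B^2) i j * 3 + (B^3) i j + B i j * 3 = 0
    have h20 : (3:ℤ)^(a*(0+2)) ∣ (B^2) i j := hpowdvd 0 i j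
    have h30 : (3:ℤ)^(a*(1+2)) ∣ (B^3) i j := hpowdvd 1 i j
    have h2 : (3:ℤ)^(2*a+1) ∣ (B^2) i j * 3 := by
      rw [pow_succ]
      exact mul_dvd_mul (dvd_trans (pow_dvd_pow 3 (by omega)) h20) dvd_rfl
    have h3' : (3:ℤ)^(2*a+1) ∣ (B^3) i j :=
      dvd_trans (pow_dvd_pow 3 (by omega)) h30
    have hBd : (3:ℤ)^(2*a+1) ∣ B i j * 3 := by
      have heq : B i j * 3 = -((B^2) i j * 3 + (B^3) i j) := by linarith
      rw [heq]
      exact dvd_neg.mpr (dvd_add h2 h3')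
    have : (3:ℤ)^(2*a) ∣ B i j := by
      obtain ⟨s, hs⟩ := hBd
      refine ⟨s, ?_⟩
      have h30 : (3:ℤ) ≠ 0 := by norm_num
      apply mul_right_cancel₀ h30
      rw [hs, pow_succ]
      ring
    exact dvd_trans (pow_dvd_pow 3 (by omega)) this
  · -- p ≠ 3
    apply hnd
    intro i j
    have he := hentry i j
    have hsumdvd : (3:ℤ)^(a+1) ∣ ∑ m ∈ range (q+1), (B^(m+2)) i j * (((q+2).choose (m+2) : ℕ) : ℤ) := by
      refine Finset.dvd_sum fun m _ => dvd_mul_of_dvd_left ?_ _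
      have hm := hpowdvd m i j
      exact dvd_trans (pow_dvd_pow 3 (by nlinarith)) hm
    have hBd : (3:ℤ)^(a+1) ∣ B i j * (((q+2).choose 1 : ℕ) : ℤ) := by
      have heq : B i j * (((q+2).choose 1 : ℕ) : ℤ) = -(∑ m ∈ range (q+1), (B^(m+2)) i j * (((q+2).choose (m+2) : ℕ) : ℤ)) := by
        linarith [hentry i j]
      rw [heq]
      exact dvd_neg.mpr hsumdvd
    have hco : IsCoprime ((3:ℤ)^(a+1)) (((q+2).choose 1 : ℕ) : ℤ) := by
      rw [Nat.choose_one_right]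
      have hc : Nat.Coprime 3 (q+2) :=
        (Nat.coprime_primes (by norm_num) hp).mpr (by omega)
      exact (Nat.isCoprime_iff_coprime.mpr hc).pow_left
    exact hco.dvd_of_dvd_mul_right hBd

theorem stmt_7 (n : ℕ) (A : GL (Fin n) ℤ) (k : ℕ) (hk : 1 ≤ k) (hA : A ^ k = 1)
    (h3 : (A : Matrix (Fin n) (Fin n) ℤ).map (Int.cast : ℤ → ZMod 3) = 1) :
    A = 1 := by
  have key : ∀ k, 1 ≤ k → A ^ k = 1 → A = 1 := by
    intro k
    induction k using Nat.strong_induction_on with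
    | _ k IH =>
      intro hk1 hA1
      rcases eq_or_lt_of_le hk1 with h1 | h2
      · rw [← h1, pow_one] at hA1; exact hA1
      · obtain ⟨p, hp, hpk⟩ := Nat.exists_prime_and_dvd (show k ≠ 1 by omega)
        set m := k / p with hm
        have hmp : m * p = k := Nat.div_mul_cancel hpk
        have hp2 := hp.two_le
        have hm1 : 1 ≤ m := Nat.one_le_div_iff (by omega) |>.mpr (Nat.le_of_dvd (by omega) hpk)
        have hmk : m < k := by
          rw [← hmp]; nlinarith
        -- matrix-level power equation
        have hmatpow : (1 + ((A ^ m : GL (Fin n) ℤ) : Matrix (Fin n) (Fin n) ℤ) - 1) ^ p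
            = (((A ^ m) ^ p : GL (Fin n) ℤ) : Matrix (Fin n) (Fin n) ℤ) := by
          simp [Units.val_pow_eq_pow_val]
        have hAp : (1 + (((A ^ m : GL (Fin n) ℤ) : Matrix (Fin n) (Fin n) ℤ) - 1)) ^ p = 1 := by
          have h1' : (A ^ m) ^ p = 1 := by rw [← pow_mul, hmp, hA1]
          have := congrArg (Units.val) h1'
          rw [Units.val_pow_eq_pow_val] at this
          simpa using this
        -- 3 divides entries
        have h3m : ∀ i j, (3:ℤ) ∣ (((A ^ m : GL (Fin n) ℤ) : Matrix (Fin n) (Fin n) ℤ) - 1) i j := by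
          intro i j
          have hmap : ((A ^ m : GL (Fin n) ℤ) : Matrix (Fin n) (Fin n) ℤ).map
              (Int.cast : ℤ → ZMod 3) = 1 := by
            rw [Units.val_pow_eq_pow_val]
            have : ((A : Matrix (Fin n) (Fin n) ℤ) ^ m).map (Int.cast : ℤ → ZMod 3)
                = ((A : Matrix (Fin n) (Fin n) ℤ).map (Int.cast : ℤ → ZMod 3)) ^ m := by
              simpa using congrArg (fun M => M) (map_pow ((Int.castRingHom (ZMod 3)).mapMatrix) (A : Matrix (Fin n) (Fin n) ℤ) m)
            rw [this, h3, one_pow]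
          have h0 := congrFun (congrFun hmap i) j
          simp only [Matrix.map_apply, Matrix.one_apply] at h0
          have hz : (((((A ^ m : GL (Fin n) ℤ) : Matrix (Fin n) (Fin n) ℤ) - 1) i j : ℤ) : ZMod 3) = 0 := by
            push_cast
            rw [Units.val_pow_eq_pow_val] at h0
            simp [Matrix.sub_apply, Matrix.one_apply, apply_ite (Int.cast : ℤ → ZMod 3)]
            rw [sub_eq_zero]
            exact h0
          exact_mod_cast (ZMod.intCast_zmod_eq_zero_iff_dvd _ 3).mp hz
        have hB0 := prime_case p hp _ h3m hAp
        have hAm : A ^ m = 1 := by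
          apply Units.ext
          have : ((A ^ m : GL (Fin n) ℤ) : Matrix (Fin n) (Fin n) ℤ) - 1 = 0 := hB0
          have h2' : ((A ^ m : GL (Fin n) ℤ) : Matrix (Fin n) (Fin n) ℤ) = 1 := by
            linear_combination (norm := abel) this
          simpa using h2'
        exact IH m hmk hm1 hAm
  exact key k hk hA
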